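/- Let p ≥ 5, let q and u be units mod p with uq not ≡ ±1 and u not ≡ ±1 (mod p), and suppose 2 ≤ [uq]_p ≤ p - 2 is replaced by C = p - [uq]_p satisfying 2 ≤ C ≤ p-2. Then for any integers s₁, s₂, there exists m such that exactly one of [s₁+m]_p < C and [s₂+mu]_p < C holds. -/

import Mathlib

/-- If `u ≢ ±1` and `uq ≢ ±1 (mod p)` and `C = p - [uq]_p` satisfies
`2 ≤ C ≤ p - 2`, then for any `s₁, s₂` there is `m` for which exactly one of
`[s₁+m]_p < C` and `[s₂+mu]_p < C` holds. -/
theorem stmt_11 (p : ℕ) (hp : 5 ≤ p) (q u : ℤ)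
    (hq : IsUnit ((q : ZMod p))) (hu : IsUnit ((u : ZMod p)))
    (hu1 : ¬ u ≡ 1 [ZMOD p]) (hu1' : ¬ u ≡ -1 [ZMOD p])
    (huq1 : ¬ u * q ≡ 1 [ZMOD p]) (huq1' : ¬ u * q ≡ -1 [ZMOD p])
    (C : ℤ) (hC : C = (p : ℤ) - (u * q) % (p : ℤ))
    (hC2 : 2 ≤ C) (hC2' : C ≤ (p : ℤ) - 2) :
    ∀ s₁ s₂ : ℤ, ∃ m : ℤ,
      Xor' ((s₁ + m) % (p : ℤ) < C) ((s₂ + m * u) % (p : ℤ) < C) := by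
  intro s₁ s₂
  by_contra h
  push_neg at h
  haveI : NeZero p := ⟨by omega⟩
  set Cn := C.toNat with hCn
  have hCint : (Cn : ℤ) = C := Int.toNat_of_nonneg (by omega)
  have hCn2 : 2 ≤ Cn := by omega
  have hCnp : Cn ≤ p - 2 := by omega
  set u' : ZMod p := (u : ZMod p) with hu'
  set c' : ZMod p := ((s₂ - s₁ * u : ℤ) : ZMod p) with hc'
  -- translate hypothesis to ZMod
  have H : ∀ x : ZMod p, (x.val < Cn ↔ (u' * x + c').val < Cn) := by
    intro x
    have hx := h ((x.val : ℤ) - s₁)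
    rw [Xor', not_xor] at hx
    have e1 : (s₁ + ((x.val : ℤ) - s₁)) % (p : ℤ) = (x.val : ℤ) := by
      have h1 : (s₁ + ((x.val : ℤ) - s₁)) = (x.val : ℤ) := by ring
      rw [h1, Int.emod_eq_of_lt (by positivity) (by exact_mod_cast x.val_lt)]
    have e2 : (s₂ + ((x.val : ℤ) - s₁) * u) % (p : ℤ) = ((u' * x + c').val : ℤ) := by
      have h2 : ((s₂ + ((x.val : ℤ) - s₁) * u : ℤ) : ZMod p) = u' * x + c' := by
        rw [hc']
        push_cast
        simp only [ZMod.natCast_val, ZMod.cast_id]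
        ring
      rw [← h2, ZMod.val_intCast]
    rw [e1, e2] at hx
    constructor
    · intro hv
      have := hx.mp (by omega)
      omega
    · intro hv
      have := hx.mpr (by omega)
      omega
  -- the set of pairs
  set S : Finset (ZMod p) :=
    Finset.univ.filter (fun x => x.val < Cn ∧ (x + u').val < Cn) with hS
  -- lower bound
  have hlow : Cn - 1 ≤ S.card := by
    have := Finset.card_le_card_of_injOn (f := fun j : ℕ => u' * (j : ZMod p) + c')
      (s := Finset.range (Cn - 1)) (t := S) ?_ ?_
    · simpa using this
    · intro j hj
      rw [Finset.mem_coe, Finset.mem_range] at hj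
      have hv : ((j : ℕ) : ZMod p).val = j := ZMod.val_cast_of_lt (by omega)
      have hv1 : ((j + 1 : ℕ) : ZMod p).val = j + 1 := ZMod.val_cast_of_lt (by omega)
      simp only [hS, Finset.mem_coe, Finset.mem_filter, Finset.mem_univ, true_and]
      constructor
      · exact (H ((j : ℕ) : ZMod p)).mp (by omega)
      · have := (H ((j + 1 : ℕ) : ZMod p)).mp (by omega)
        have heq : u' * ((j + 1 : ℕ) : ZMod p) + c' = u' * ((j : ℕ) : ZMod p) + c' + u' := by
          push_cast; ring
        rw [heq] at this
        exact this
    · intro j hj j' hj' heq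
      simp only [Finset.coe_range, Set.mem_Iio, Finset.mem_coe, Finset.mem_range] at hj hj'
      have : (j : ZMod p) = (j' : ZMod p) := by
        have := add_right_cancel heq
        exact hu.mul_left_cancel this
      have := congrArg ZMod.val this
      rwa [ZMod.val_cast_of_lt (by omega), ZMod.val_cast_of_lt (by omega)] at this
  -- facts about a = u'.val
  set a := u'.val with ha
  have hap : a < p := ZMod.val_lt u'
  haveI : Fact (1 < p) := ⟨by omega⟩
  have ha0 : a ≠ 0 := by
    intro h0
    have : u' = 0 := by rwa [ZMod.val_eq_zero] at h0
    exact hu.ne_zero this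
  have hcast : ((a : ℕ) : ZMod p) = u' := by
    simp [ha, ZMod.natCast_val, ZMod.cast_id]
  have ha1 : a ≠ 1 := by
    intro h1
    apply hu1
    rw [← ZMod.intCast_eq_intCast_iff]
    have : u' = 1 := by rw [← hcast, h1]; norm_num
    simpa [hu'] using this
  have ha1' : a ≠ p - 1 := by
    intro h1
    apply hu1'
    rw [← ZMod.intCast_eq_intCast_iff]
    have : u' = -1 := by
      rw [← hcast, h1]
      push_cast [Nat.cast_sub (by omega : 1 ≤ p)]
      simp
    simpa [hu'] using this
  -- upper bound
  have hup : S.card ≤ (Cn - a) + (Cn - (p - a)) := by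
    have hsub : S.card ≤ ((Finset.range (Cn - a)) ∪ (Finset.Ico (p - a) Cn)).card := by
      apply Finset.card_le_card_of_injOn (f := ZMod.val)
      · intro x hx
        simp only [hS, Finset.mem_coe, Finset.mem_filter, Finset.mem_univ, true_and] at hx
        obtain ⟨hx1, hx2⟩ := hx
        have hv : x.val < p := ZMod.val_lt x
        have hadd : (x + u').val = (x.val + a) % p := ZMod.val_add x u'
        simp only [Finset.mem_coe, Finset.mem_union, Finset.mem_range, Finset.mem_Ico]
        rcases lt_or_ge (x.val + a) p with hlt | hge
        · rw [Nat.mod_eq_of_lt hlt] at hadd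
          left; omega
        · have : (x.val + a) % p = x.val + a - p := by
            rw [Nat.mod_eq_sub_mod hge, Nat.mod_eq_of_lt (by omega)]
          rw [this] at hadd
          right; omega
      · intro x _ y _ hxy
        exact ZMod.val_injective p hxy
    calc S.card ≤ _ := hsub
      _ ≤ (Finset.range (Cn - a)).card + (Finset.Ico (p - a) Cn).card :=
          Finset.card_union_le _ _
      _ = (Cn - a) + (Cn - (p - a)) := by rw [Finset.card_range, Nat.card_Ico]
  omega
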